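/- Let X be a Banach space and C a convex weak-star compact subset of B_{X*} such that every convex combination of slices of C has diameter 2. Then K = co(C ∪ (−C)) is a weak-star compact convex subset of B_{X*} such that every convex combination of slices of K has diameter 2. -/

import Mathlib

open scoped BigOperators
open Metric

noncomputable section

/-- The convex combination `∑ lam i • S i` of sets. -/
def ccomb {E : Type*} [AddCommMonoid E] [Module ℝ E] {n : ℕ}
    (lam : Fin n → ℝ) (S : Fin n → Set E) : Set E :=
  {y | ∃ f : Fin n → E, (∀ i, f i ∈ S i) ∧ y = ∑ i, lam i • f i}

/-- A slice of a set `A ⊆ X*`: a nonempty intersection of `A` with an open half-space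
determined by a functional `φ` on `X*` and a level `β`. -/
def setSlice {X : Type*} [NormedAddCommGroup X] [NormedSpace ℝ X]
    (A : Set (StrongDual ℝ X))
    (φ : StrongDual ℝ (StrongDual ℝ X)) (β : ℝ) :
    Set (StrongDual ℝ X) :=
  {f ∈ A | β < φ f}

/-- The convex join of two compact sets is compact. -/
lemma isCompact_convexJoin {E : Type*} [AddCommGroup E] [Module ℝ E]
    [TopologicalSpace E] [ContinuousAdd E] [ContinuousSMul ℝ E]
    {s t : Set E} (hs : IsCompact s) (ht : IsCompact t) :
    IsCompact (convexJoin ℝ s t) := by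
  have heq : convexJoin ℝ s t =
      (fun p : ℝ × E × E => (1 - p.1) • p.2.1 + p.1 • p.2.2) ''
        (Set.Icc (0:ℝ) 1 ×ˢ s ×ˢ t) := by
    ext z
    simp only [mem_convexJoin, Set.mem_image, Set.mem_prod]
    constructor
    · rintro ⟨x, hx, y, hy, hz⟩
      rw [segment_eq_image ℝ] at hz
      obtain ⟨θ, hθ, hz⟩ := hz
      exact ⟨(θ, x, y), ⟨hθ, hx, hy⟩, hz⟩
    · rintro ⟨⟨θ, x, y⟩, ⟨hθ, hx, hy⟩, hz⟩
      refine ⟨x, hx, y, hy, ?_⟩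
      rw [segment_eq_image ℝ]
      exact ⟨θ, hθ, hz⟩
  rw [heq]
  exact (isCompact_Icc.prod (hs.prod ht)).image (by fun_prop)

theorem symmetrization_preserves_ccomb_slices_diam_two
    (X : Type*) [NormedAddCommGroup X] [NormedSpace ℝ X] [CompleteSpace X]
    (C : Set (StrongDual ℝ X))
    (hCconv : Convex ℝ C) (hCball : C ⊆ closedBall 0 1)
    (hCcomp : IsCompact ((fun f => StrongDual.toWeakDual f) '' C))
    (hC : ∀ (n : ℕ) (lam : Fin n → ℝ), (∀ i, 0 < lam i) → ∑ i, lam i = 1 →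
      ∀ (φ : Fin n → StrongDual ℝ (StrongDual ℝ X)) (β : Fin n → ℝ),
      (∀ i, (setSlice C (φ i) (β i)).Nonempty) →
      Metric.diam (ccomb lam (fun i => setSlice C (φ i) (β i))) = 2) :
    Convex ℝ (convexHull ℝ (C ∪ -C)) ∧
    convexHull ℝ (C ∪ -C) ⊆ closedBall 0 1 ∧
    IsCompact ((fun f => StrongDual.toWeakDual f) '' (convexHull ℝ (C ∪ -C))) ∧
    (∀ (n : ℕ) (lam : Fin n → ℝ), (∀ i, 0 < lam i) → ∑ i, lam i = 1 →
      ∀ (φ : Fin n → StrongDual ℝ (StrongDual ℝ X)) (β : Fin n → ℝ),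
      (∀ i, (setSlice (convexHull ℝ (C ∪ -C)) (φ i) (β i)).Nonempty) →
      Metric.diam
        (ccomb lam (fun i => setSlice (convexHull ℝ (C ∪ -C)) (φ i) (β i))) = 2) := by
  classical
  set K := convexHull ℝ (C ∪ -C) with hKdef
  -- basic inclusions
  have hCK : C ⊆ K := Set.subset_union_left.trans (subset_convexHull ℝ _)
  have hnegCK : -C ⊆ K := Set.subset_union_right.trans (subset_convexHull ℝ _)
  have hKball : K ⊆ closedBall 0 1 := by
    apply convexHull_min _ (convex_closedBall 0 1)
    rintro f (hf | hf)
    · exact hCball hf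
    · rw [Set.mem_neg] at hf
      have := hCball hf
      rw [mem_closedBall_zero_iff] at this ⊢
      simpa using this
  -- compactness part
  have hm : IsLinearMap ℝ (fun f : StrongDual ℝ X => StrongDual.toWeakDual f) :=
    ⟨fun x y => map_add _ x y, fun c x => map_smul _ c x⟩
  have hcomp : IsCompact ((fun f => StrongDual.toWeakDual f) '' K) := by
    rcases C.eq_empty_or_nonempty with rfl | hCne
    · have hK0 : K = ∅ := by rw [hKdef]; simp
      rw [hK0]
      simp
    set m := fun f : StrongDual ℝ X => StrongDual.toWeakDual f with hmdef
    have hmneg : ∀ f, m (-f) = -(m f) := fun f => map_neg StrongDual.toWeakDual f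
    have himgneg : m '' (-C) = -(m '' C) := by
      ext x
      constructor
      · rintro ⟨f, hf, rfl⟩
        rw [Set.mem_neg]
        exact ⟨-f, Set.mem_neg.mp hf, hmneg f⟩
      · intro hx
        rw [Set.mem_neg] at hx
        obtain ⟨f, hf, hfx⟩ := hx
        exact ⟨-f, Set.neg_mem_neg.mpr hf, by rw [hmneg, hfx, neg_neg]⟩
    have hDconv : Convex ℝ (m '' C) := hCconv.is_linear_image hm
    have h1 : m '' K = convexHull ℝ (m '' C ∪ -(m '' C)) := by
      rw [hKdef, hm.image_convexHull, Set.image_union, himgneg]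
    rw [h1, convexHull_union (hCne.image m)
        (by rw [← himgneg]; exact (hCne.neg).image m),
      hDconv.convexHull_eq, hDconv.neg.convexHull_eq]
    exact isCompact_convexJoin hCcomp (hCcomp.neg)
  refine ⟨convex_convexHull ℝ _, hKball, hcomp, ?_⟩
  -- the diameter-two part
  intro n lam hpos hsum φ β hne
  -- transfer of slices
  have key : ∀ i, (setSlice C (φ i) (β i)).Nonempty ∨ (setSlice C (-(φ i)) (β i)).Nonempty := by
    intro i
    obtain ⟨k, hkK, hkβ⟩ := hne i
    by_contra h
    obtain ⟨h1, h2⟩ := not_or.mp h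
    have hsub : C ∪ -C ⊆ {f | (φ i) f ≤ β i} := by
      rintro f (hf | hf)
      · by_contra hc
        exact h1 ⟨f, hf, lt_of_not_ge hc⟩
      · rw [Set.mem_neg] at hf
        by_contra hc
        refine h2 ⟨-f, hf, ?_⟩
        simp only [ContinuousLinearMap.neg_apply, map_neg, neg_neg]
        exact lt_of_not_ge hc
    have := convexHull_min hsub
      (convex_halfSpace_le ⟨fun x y => map_add _ x y, fun c x => map_smul _ c x⟩ (β i)) hkK
    exact absurd this (not_le.mpr hkβ)
  -- choose, for each index, a slice of C and a way to transport pairs back into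
  -- the slice of K
  have hkey2 : ∀ i, ∃ ψi : StrongDual ℝ (StrongDual ℝ X),
      (setSlice C ψi (β i)).Nonempty ∧
      ∀ f g, f ∈ setSlice C ψi (β i) → g ∈ setSlice C ψi (β i) →
        ∃ a b, a ∈ setSlice K (φ i) (β i) ∧ b ∈ setSlice K (φ i) (β i) ∧
          a - b = f - g := by
    intro i
    rcases key i with h | h
    · exact ⟨φ i, h, fun f g hf hg =>
        ⟨f, g, ⟨hCK hf.1, hf.2⟩, ⟨hCK hg.1, hg.2⟩, rfl⟩⟩
    · refine ⟨-(φ i), h, fun f g hf hg => ⟨-g, -f, ⟨?_, ?_⟩, ⟨?_, ?_⟩, by abel⟩⟩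
      · exact hnegCK (Set.neg_mem_neg.mpr hg.1)
      · have := hg.2
        rw [ContinuousLinearMap.neg_apply] at this
        rw [map_neg]
        exact this
      · exact hnegCK (Set.neg_mem_neg.mpr hf.1)
      · have := hf.2
        rw [ContinuousLinearMap.neg_apply] at this
        rw [map_neg]
        exact this
  choose ψ hψne hψpair using hkey2
  have hdiamT := hC n lam hpos hsum ψ β hψne
  -- bound above
  have hccsub : ccomb lam (fun i => setSlice K (φ i) (β i)) ⊆ closedBall 0 1 := by
    rintro y ⟨f, hf, rfl⟩
    rw [mem_closedBall_zero_iff]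
    calc ‖∑ i, lam i • f i‖ ≤ ∑ i, ‖lam i • f i‖ := norm_sum_le _ _
      _ ≤ ∑ i, lam i := by
          apply Finset.sum_le_sum
          intro i _
          rw [norm_smul, Real.norm_eq_abs, abs_of_pos (hpos i)]
          have : ‖f i‖ ≤ 1 := mem_closedBall_zero_iff.mp (hKball (hf i).1)
          nlinarith [(hpos i).le]
      _ = 1 := hsum
  have hbdd : Bornology.IsBounded (ccomb lam (fun i => setSlice K (φ i) (β i))) :=
    (isBounded_closedBall).subset hccsub
  have hle : Metric.diam (ccomb lam (fun i => setSlice K (φ i) (β i))) ≤ 2 := by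
    apply Metric.diam_le_of_forall_dist_le (by norm_num)
    intro x hx y hy
    have hx1 := mem_closedBall_zero_iff.mp (hccsub hx)
    have hy1 := mem_closedBall_zero_iff.mp (hccsub hy)
    calc dist x y = ‖x - y‖ := dist_eq_norm x y
      _ ≤ ‖x‖ + ‖y‖ := norm_sub_le x y
      _ ≤ 2 := by linarith
  refine le_antisymm hle ?_
  -- bound below
  apply le_of_forall_pos_le_add
  intro ε hε
  rcases le_or_gt 2 ε with hε2 | hε2
  · have := Metric.diam_nonneg (s := ccomb lam (fun i => setSlice K (φ i) (β i)))
    linarith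
  -- find far apart points in the C-combination
  obtain ⟨u, hu, v, hv, huv⟩ : ∃ u ∈ ccomb lam (fun i => setSlice C (ψ i) (β i)),
      ∃ v ∈ ccomb lam (fun i => setSlice C (ψ i) (β i)), 2 - ε < dist u v := by
    by_contra h
    push_neg at h
    have : Metric.diam (ccomb lam (fun i => setSlice C (ψ i) (β i))) ≤ 2 - ε :=
      Metric.diam_le_of_forall_dist_le (by linarith) h
    rw [hdiamT] at this
    linarith
  obtain ⟨f, hf, rfl⟩ := hu
  obtain ⟨g, hg, rfl⟩ := hv
  -- transport back to slices of K
  choose a b haS hbS habi using fun i => hψpair i (f i) (g i) (hf i) (hg i)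
  have hamem : (∑ i, lam i • a i) ∈ ccomb lam (fun i => setSlice K (φ i) (β i)) :=
    ⟨a, haS, rfl⟩
  have hbmem : (∑ i, lam i • b i) ∈ ccomb lam (fun i => setSlice K (φ i) (β i)) :=
    ⟨b, hbS, rfl⟩
  have hab : (∑ i, lam i • a i) - (∑ i, lam i • b i)
      = (∑ i, lam i • f i) - (∑ i, lam i • g i) := by
    rw [← Finset.sum_sub_distrib, ← Finset.sum_sub_distrib]
    refine Finset.sum_congr rfl fun i _ => ?_
    rw [show lam i • a i - lam i • b i = lam i • (a i - b i) from (smul_sub _ _ _).symm, habi i]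
    exact smul_sub _ _ _
  have hdisteq : dist (∑ i, lam i • a i) (∑ i, lam i • b i)
      = dist (∑ i, lam i • f i) (∑ i, lam i • g i) := by
    rw [dist_eq_norm, dist_eq_norm, hab]
  have := Metric.dist_le_diam_of_mem hbdd hamem hbmem
  rw [hdisteq] at this
  linarith
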